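/- arXiv:2012.08126 — 2 statements merged into one kernel-verified Lean document; each statement's English description precedes it below -/
import Mathlib

section
/- If F = c·I + YᵀY with c > 0 and g* = F⁻¹Uᵀ(UF⁻¹Uᵀ)⁻¹ũ, then for any g with Ug = ũ one has c·‖g*‖₂² + ‖Y g*‖₂² ≤ c·‖g‖₂² + ‖Y g‖₂². -/
open Matrix

theorem stmt12 (M L p : ℕ) (hLM : L ≤ M) (c : ℝ) (hc : 0 < c)
    (Y : Matrix (Fin p) (Fin M) ℝ)
    (U : Matrix (Fin L) (Fin M) ℝ) (hU : U.rank = L)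
    (F : Matrix (Fin M) (Fin M) ℝ)
    (hF : F = c • (1 : Matrix (Fin M) (Fin M) ℝ) + Yᵀ * Y)
    (utilde : Fin L → ℝ) (gstar : Fin M → ℝ)
    (hg : gstar = (F⁻¹ * Uᵀ * (U * F⁻¹ * Uᵀ)⁻¹).mulVec utilde) :
    ∀ g : Fin M → ℝ, U.mulVec g = utilde →
      c * ∑ i, gstar i ^ 2 + ∑ i, (Y.mulVec gstar) i ^ 2 ≤
      c * ∑ i, g i ^ 2 + ∑ i, (Y.mulVec g) i ^ 2 := by
  -- The quadratic form
  have hQ : ∀ v : Fin M → ℝ,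
      c * ∑ i, v i ^ 2 + ∑ i, (Y.mulVec v) i ^ 2 = v ⬝ᵥ F *ᵥ v := by
    intro v
    have h1 : ∑ i, v i ^ 2 = v ⬝ᵥ v := by simp [dotProduct, pow_two]
    have h2 : ∑ i, (Y.mulVec v) i ^ 2 = (Y *ᵥ v) ⬝ᵥ (Y *ᵥ v) := by
      simp [dotProduct, pow_two]
    have h3 : v ⬝ᵥ (Yᵀ * Y) *ᵥ v = (Y *ᵥ v) ⬝ᵥ (Y *ᵥ v) := by
      rw [← mulVec_mulVec, dotProduct_mulVec, vecMul_transpose]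
    rw [h1, h2, hF, add_mulVec, dotProduct_add, smul_mulVec, one_mulVec,
      dotProduct_smul, smul_eq_mul, h3]
  -- Positivity facts
  have hcI : (c • (1 : Matrix (Fin M) (Fin M) ℝ)).PosDef := by
    refine posDef_iff_dotProduct_mulVec.mpr ⟨?_, fun x hx => ?_⟩
    · simp [Matrix.IsHermitian]
    · rw [smul_mulVec, one_mulVec, dotProduct_smul, smul_eq_mul]
      exact mul_pos hc (dotProduct_star_self_pos_iff.mpr hx)
  have hYpsd : (Yᵀ * Y).PosSemidef := by
    simpa using Matrix.posSemidef_conjTranspose_mul_self Y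
  have hFpd : F.PosDef := hF ▸ hcI.add_posSemidef hYpsd
  have hFinv : F⁻¹.PosDef := hFpd.inv
  -- Uᵀ has trivial kernel
  have hUt : ∀ x : Fin L → ℝ, Uᵀ *ᵥ x = 0 → x = 0 := by
    intro x hx
    have hrank : Uᵀ.rank = L := by rw [Matrix.rank_transpose, hU]
    have hker : LinearMap.ker (Uᵀ.mulVecLin) = ⊥ := by
      have := LinearMap.finrank_range_add_finrank_ker (Uᵀ.mulVecLin)
      rw [show Module.finrank ℝ (Fin L → ℝ) = L by simp] at this
      have h0 : Module.finrank ℝ (LinearMap.ker Uᵀ.mulVecLin) = 0 := by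
        have : Uᵀ.rank = Module.finrank ℝ (LinearMap.range Uᵀ.mulVecLin) := rfl
        omega
      exact Submodule.finrank_eq_zero.mp h0
    exact LinearMap.ker_eq_bot.mp hker
      ((show Uᵀ.mulVecLin x = 0 from hx).trans (map_zero _).symm)
  -- U F⁻¹ Uᵀ is positive definite, hence invertible
  have hW : (U * F⁻¹ * Uᵀ).PosDef := by
    refine posDef_iff_dotProduct_mulVec.mpr ⟨?_, fun x hx => ?_⟩
    · have hFt : F⁻¹ᵀ = F⁻¹ := by
        rw [← conjTranspose_eq_transpose_of_trivial]; exact hFinv.isHermitian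
      simp only [Matrix.IsHermitian]
      simp [conjTranspose_mul, conjTranspose_eq_transpose_of_trivial, Matrix.mul_assoc, hFt]
    · have hx' : Uᵀ *ᵥ x ≠ 0 := fun h => hx (hUt x h)
      have := hFinv.dotProduct_mulVec_pos hx'
      calc (0:ℝ) < star (Uᵀ *ᵥ x) ⬝ᵥ F⁻¹ *ᵥ (Uᵀ *ᵥ x) := this
        _ = star x ⬝ᵥ (U * F⁻¹ * Uᵀ) *ᵥ x := by
            rw [← mulVec_mulVec, ← mulVec_mulVec]
            rw [show star (Uᵀ *ᵥ x) = Uᵀ *ᵥ (star x) by simp [star_mulVec, vecMul_transpose]]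
            rw [← vecMul_transpose, transpose_transpose, ← dotProduct_mulVec]
  have hWunit := hW.isUnit
  have hFunit := hFpd.isUnit
  -- U g* = utilde
  have hUg : U *ᵥ gstar = utilde := by
    rw [hg, mulVec_mulVec, show U * (F⁻¹ * Uᵀ * (U * F⁻¹ * Uᵀ)⁻¹)
        = (U * F⁻¹ * Uᵀ) * (U * F⁻¹ * Uᵀ)⁻¹ by simp [Matrix.mul_assoc], Matrix.mul_nonsing_inv _
        ((Matrix.isUnit_iff_isUnit_det _).mp hWunit), one_mulVec]
  -- F g* lies in the row space of U
  have hFg : F *ᵥ gstar = Uᵀ *ᵥ ((U * F⁻¹ * Uᵀ)⁻¹ *ᵥ utilde) := by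
    rw [hg, mulVec_mulVec, mulVec_mulVec, show F * (F⁻¹ * Uᵀ * (U * F⁻¹ * Uᵀ)⁻¹)
        = (F * F⁻¹) * (Uᵀ * (U * F⁻¹ * Uᵀ)⁻¹) by simp [Matrix.mul_assoc], Matrix.mul_nonsing_inv _
        ((Matrix.isUnit_iff_isUnit_det _).mp hFunit), Matrix.one_mul, Matrix.mul_assoc]
  intro g hUgv
  rw [hQ, hQ]
  set h : Fin M → ℝ := g - gstar with hh
  have hg' : g = gstar + h := by simp [hh]
  have hUh : U *ᵥ h = 0 := by
    rw [hh, mulVec_sub, hUgv, hUg, sub_self]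
  -- cross term vanishes
  have hcross : h ⬝ᵥ F *ᵥ gstar = 0 := by
    rw [hFg, dotProduct_mulVec, vecMul_transpose, hUh, zero_dotProduct]
  have hsymm : gstar ⬝ᵥ F *ᵥ h = 0 := by
    have hFt : Fᵀ = F := by
      rw [← conjTranspose_eq_transpose_of_trivial]; exact hFpd.isHermitian
    rw [dotProduct_mulVec, ← hFt, vecMul_transpose, dotProduct_comm]
    exact hcross
  have hpos : 0 ≤ h ⬝ᵥ F *ᵥ h := by
    have := hFpd.posSemidef.dotProduct_mulVec_nonneg h
    simpa using this
  rw [hg', mulVec_add, dotProduct_add, add_dotProduct, add_dotProduct, hcross, hsymm]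
  linarith
end

section
/- If c > 0 and Y is any real matrix with M columns, then the minimizer g* of gᵀ(cI + YᵀY)g subject to Ug = ũ (U full row rank) satisfies ‖g*‖₂² ≤ (1/c)·ũᵀ(U(cI+YᵀY)⁻¹Uᵀ)⁻¹ũ ≤ (1/c)·(c + λ_max(YᵀY))·ũᵀ(UUᵀ)⁻¹ũ. -/
open Matrix

lemma dshift17 {m n : ℕ} (A : Matrix (Fin m) (Fin n) ℝ) (x : Fin n → ℝ) (y : Fin m → ℝ) :
    (A *ᵥ x) ⬝ᵥ y = x ⬝ᵥ (Aᵀ *ᵥ y) := by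
  rw [dotProduct_comm, dotProduct_mulVec, ← mulVec_transpose, dotProduct_comm]

lemma rayleigh17 {M : ℕ} (A : Matrix (Fin M) (Fin M) ℝ) (hA : A.IsHermitian) (x : Fin M → ℝ) :
    x ⬝ᵥ (A *ᵥ x) ≤ (⨆ i, hA.eigenvalues i) * (x ⬝ᵥ x) := by
  set lam := ⨆ i, hA.eigenvalues i with hl
  set V : Matrix (Fin M) (Fin M) ℝ := (hA.eigenvectorUnitary : Matrix (Fin M) (Fin M) ℝ) with hVdef
  have hstar : (star V : Matrix (Fin M) (Fin M) ℝ) = Vᵀ := by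
    rw [Matrix.star_eq_conjTranspose, conjTranspose_eq_transpose_of_trivial]
  have hVV : V * Vᵀ = 1 := by
    have h := (Matrix.mem_unitaryGroup_iff).mp hA.eigenvectorUnitary.2
    rwa [hstar] at h
  set y : Fin M → ℝ := Vᵀ *ᵥ x with hy
  have hyy : y ⬝ᵥ y = x ⬝ᵥ x := by
    calc y ⬝ᵥ y = (Vᵀ *ᵥ x) ⬝ᵥ y := rfl
      _ = x ⬝ᵥ (Vᵀᵀ *ᵥ y) := dshift17 _ _ _
      _ = x ⬝ᵥ ((V * Vᵀ) *ᵥ x) := by rw [transpose_transpose, hy, mulVec_mulVec]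
      _ = x ⬝ᵥ x := by rw [hVV, one_mulVec]
  have hxAx : x ⬝ᵥ (A *ᵥ x) = ∑ i, hA.eigenvalues i * (y i)^2 := by
    conv_lhs => rw [hA.spectral_theorem, Unitary.conjStarAlgAut_apply, hstar]
    have : ((V * diagonal (RCLike.ofReal ∘ hA.eigenvalues) * Vᵀ) *ᵥ x)
        = V *ᵥ (diagonal (RCLike.ofReal ∘ hA.eigenvalues) *ᵥ y) := by
      rw [mulVec_mulVec, mulVec_mulVec]
    rw [this, dotProduct_comm, dshift17, dotProduct_comm]
    simp [dotProduct, mulVec_diagonal, RCLike.ofReal]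
    ring_nf
    exact Finset.sum_congr rfl fun i _ => by ring
  rw [hxAx, ← hyy]
  have hb : ∀ i, hA.eigenvalues i ≤ lam := fun i =>
    le_ciSup (Set.Finite.bddAbove (Set.finite_range _)) i
  calc ∑ i, hA.eigenvalues i * (y i)^2 ≤ ∑ i, lam * (y i)^2 := by
        apply Finset.sum_le_sum
        intro i _
        exact mul_le_mul_of_nonneg_right (hb i) (sq_nonneg _)
    _ = lam * (y ⬝ᵥ y) := by
        rw [dotProduct, Finset.mul_sum]
        exact Finset.sum_congr rfl fun i _ => by ring

theorem stmt17 (M L p : ℕ) (hLM : L ≤ M) (c : ℝ) (hc : 0 < c)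
    (Y : Matrix (Fin p) (Fin M) ℝ)
    (U : Matrix (Fin L) (Fin M) ℝ) (hU : U.rank = L)
    (utilde : Fin L → ℝ)
    (F : Matrix (Fin M) (Fin M) ℝ)
    (hF : F = c • (1 : Matrix (Fin M) (Fin M) ℝ) + Yᵀ * Y)
    (gstar : Fin M → ℝ)
    (hgfeas : U.mulVec gstar = utilde)
    (hgmin : ∀ g : Fin M → ℝ, U.mulVec g = utilde →
      gstar ⬝ᵥ F.mulVec gstar ≤ g ⬝ᵥ F.mulVec g)
    (hY : (Yᵀ * Y).IsHermitian)
    (lam : ℝ) (hlam : lam = ⨆ i : Fin M, hY.eigenvalues i) :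
    ∑ i, gstar i ^ 2 ≤ (1 / c) * (utilde ⬝ᵥ (U * F⁻¹ * Uᵀ)⁻¹.mulVec utilde) ∧
    (1 / c) * (utilde ⬝ᵥ (U * F⁻¹ * Uᵀ)⁻¹.mulVec utilde) ≤
      (1 / c) * (c + lam) * (utilde ⬝ᵥ (U * Uᵀ)⁻¹.mulVec utilde) := by
  have hYsym : (Yᵀ * Y)ᵀ = Yᵀ * Y := by rw [transpose_mul, transpose_transpose]
  have hFsym : Fᵀ = F := by
    rw [hF, transpose_add, transpose_smul, transpose_one, hYsym]
  have hquad : ∀ x : Fin M → ℝ, x ⬝ᵥ F *ᵥ x = c * (x ⬝ᵥ x) + (Y *ᵥ x) ⬝ᵥ (Y *ᵥ x) := by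
    intro x
    rw [hF, add_mulVec, dotProduct_add, smul_mulVec, dotProduct_smul, one_mulVec,
      ← mulVec_mulVec, ← dshift17]
    simp [smul_eq_mul]
  have hxx : ∀ {k : ℕ} (x : Fin k → ℝ), (0:ℝ) ≤ x ⬝ᵥ x := fun x =>
    Finset.sum_nonneg fun i _ => mul_self_nonneg _
  have hxxpos : ∀ x : Fin M → ℝ, x ≠ 0 → 0 < x ⬝ᵥ x := by
    intro x hx
    rcases Function.ne_iff.mp hx with ⟨i, hi⟩
    exact Finset.sum_pos' (fun j _ => mul_self_nonneg _)
      ⟨i, Finset.mem_univ i, mul_self_pos.mpr hi⟩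
  have hstarv : ∀ {k : ℕ} (v : Fin k → ℝ), star v = v := fun v => funext fun i => star_trivial _
  have hFherm : F.IsHermitian := by
    rw [IsHermitian, conjTranspose_eq_transpose_of_trivial]; exact hFsym
  have hFpd : F.PosDef := by
    refine PosDef.of_dotProduct_mulVec_pos hFherm fun x hx => ?_
    rw [hstarv, hquad]
    have := hxxpos x hx
    have := hxx (Y *ᵥ x)
    nlinarith
  have hFidet : IsUnit F.det := hFpd.det_pos.ne'.isUnit
  have hFFi : F * F⁻¹ = 1 := mul_nonsing_inv _ hFidet
  have hFipd : F⁻¹.PosDef := hFpd.inv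
  have hFisym : (F⁻¹)ᵀ = F⁻¹ := by rw [transpose_nonsing_inv, hFsym]
  -- injectivity of z ↦ Uᵀ *ᵥ z
  have hUlin : LinearIndependent ℝ (fun i => U i) := by
    rw [linearIndependent_iff_card_eq_finrank_span, Set.finrank, show (fun i => U i) = U.row from rfl, ← rank_eq_finrank_span_row, hU,
      Fintype.card_fin]
  have hUt : ∀ z : Fin L → ℝ, z ≠ 0 → Uᵀ *ᵥ z ≠ 0 := by
    intro z hz h0
    apply hz
    apply Matrix.vecMul_injective_iff.mpr hUlin
    show z ᵥ* U = (0 : Fin L → ℝ) ᵥ* U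
    rw [Matrix.zero_vecMul, ← mulVec_transpose, h0]
  set A := U * F⁻¹ * Uᵀ with hAdef
  set B := U * Uᵀ with hBdef
  have quadA : ∀ z : Fin L → ℝ, z ⬝ᵥ A *ᵥ z = (Uᵀ *ᵥ z) ⬝ᵥ (F⁻¹ *ᵥ (Uᵀ *ᵥ z)) := by
    intro z
    calc z ⬝ᵥ A *ᵥ z = z ⬝ᵥ (U *ᵥ ((F⁻¹ * Uᵀ) *ᵥ z)) := by rw [hAdef, Matrix.mul_assoc, ← mulVec_mulVec]
      _ = (U *ᵥ ((F⁻¹ * Uᵀ) *ᵥ z)) ⬝ᵥ z := dotProduct_comm _ _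
      _ = ((F⁻¹ * Uᵀ) *ᵥ z) ⬝ᵥ (Uᵀ *ᵥ z) := dshift17 _ _ _
      _ = (Uᵀ *ᵥ z) ⬝ᵥ ((F⁻¹ * Uᵀ) *ᵥ z) := dotProduct_comm _ _
      _ = (Uᵀ *ᵥ z) ⬝ᵥ (F⁻¹ *ᵥ (Uᵀ *ᵥ z)) := by rw [← mulVec_mulVec]
  have quadB : ∀ z : Fin L → ℝ, z ⬝ᵥ B *ᵥ z = (Uᵀ *ᵥ z) ⬝ᵥ (Uᵀ *ᵥ z) := by
    intro z
    calc z ⬝ᵥ B *ᵥ z = z ⬝ᵥ (U *ᵥ (Uᵀ *ᵥ z)) := by rw [hBdef, ← mulVec_mulVec]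
      _ = (U *ᵥ (Uᵀ *ᵥ z)) ⬝ᵥ z := dotProduct_comm _ _
      _ = (Uᵀ *ᵥ z) ⬝ᵥ (Uᵀ *ᵥ z) := dshift17 _ _ _
  have hAsym : Aᵀ = A := by
    rw [hAdef, transpose_mul, transpose_mul, transpose_transpose, hFisym, Matrix.mul_assoc]
  have hBsym : Bᵀ = B := by
    rw [hBdef, transpose_mul, transpose_transpose]
  have hApd : A.PosDef := by
    refine PosDef.of_dotProduct_mulVec_pos (by rw [IsHermitian, conjTranspose_eq_transpose_of_trivial]; exact hAsym)
      fun z hz => ?_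
    rw [hstarv, quadA]
    have := hFipd.dotProduct_mulVec_pos (hUt z hz)
    rwa [hstarv] at this
  have hBpd : B.PosDef := by
    refine PosDef.of_dotProduct_mulVec_pos (by rw [IsHermitian, conjTranspose_eq_transpose_of_trivial]; exact hBsym)
      fun z hz => ?_
    rw [hstarv, quadB]
    exact hxxpos _ (hUt z hz)
  have hAAi : A * A⁻¹ = 1 := mul_nonsing_inv _ hApd.det_pos.ne'.isUnit
  have hBBi : B * B⁻¹ = 1 := mul_nonsing_inv _ hBpd.det_pos.ne'.isUnit
  set w : Fin L → ℝ := A⁻¹ *ᵥ utilde with hw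
  set g0 : Fin M → ℝ := F⁻¹ *ᵥ (Uᵀ *ᵥ w) with hg0
  have hg0A : U *ᵥ g0 = A *ᵥ w := by
    rw [hg0, mulVec_mulVec, mulVec_mulVec, hAdef, Matrix.mul_assoc]
  have hg0feas : U *ᵥ g0 = utilde := by
    rw [hg0A, hw, mulVec_mulVec, hAAi, one_mulVec]
  have hFg0 : F *ᵥ g0 = Uᵀ *ᵥ w := by
    rw [hg0, mulVec_mulVec, hFFi, one_mulVec]
  have hval0 : g0 ⬝ᵥ F *ᵥ g0 = utilde ⬝ᵥ A⁻¹ *ᵥ utilde := by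
    rw [hFg0, ← dshift17, hg0feas, hw]
  have hmin0 : ∀ g : Fin M → ℝ, U *ᵥ g = utilde → g0 ⬝ᵥ F *ᵥ g0 ≤ g ⬝ᵥ F *ᵥ g := by
    intro g hg
    have hUh : U *ᵥ (g - g0) = 0 := by rw [mulVec_sub, hg, hg0feas, sub_self]
    have hcross : (g - g0) ⬝ᵥ (F *ᵥ g0) = 0 := by
      rw [hFg0, ← dshift17, hUh, zero_dotProduct]
    have hcross2 : g0 ⬝ᵥ (F *ᵥ (g - g0)) = 0 := by
      rw [dotProduct_comm, dshift17, hFsym]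
      exact hcross
    have hgdecomp : g = g0 + (g - g0) := by rw [add_sub_cancel]
    have hexp : g ⬝ᵥ F *ᵥ g = g0 ⬝ᵥ F *ᵥ g0 + (g - g0) ⬝ᵥ F *ᵥ (g - g0)
        + g0 ⬝ᵥ (F *ᵥ (g - g0)) + (g - g0) ⬝ᵥ (F *ᵥ g0) := by
      conv_lhs => rw [hgdecomp]
      simp only [mulVec_add, dotProduct_add, add_dotProduct]
      ring
    have hpsd : 0 ≤ (g - g0) ⬝ᵥ F *ᵥ (g - g0) := by
      rw [hquad]
      exact add_nonneg (mul_nonneg hc.le (hxx _)) (hxx _)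
    rw [hexp, hcross, hcross2]
    linarith
  have h1 : c * (gstar ⬝ᵥ gstar) ≤ utilde ⬝ᵥ A⁻¹ *ᵥ utilde := by
    have h2 := hgmin g0 hg0feas
    have h3 := hquad gstar
    have h4 := hxx (Y *ᵥ gstar)
    rw [hval0] at h2
    linarith
  set g1 : Fin M → ℝ := Uᵀ *ᵥ (B⁻¹ *ᵥ utilde) with hg1
  have hg1feas : U *ᵥ g1 = utilde := by
    rw [hg1, mulVec_mulVec, ← hBdef, mulVec_mulVec, hBBi, one_mulVec]
  have hval1 : g1 ⬝ᵥ g1 = utilde ⬝ᵥ B⁻¹ *ᵥ utilde := by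
    calc g1 ⬝ᵥ g1 = (Uᵀ *ᵥ (B⁻¹ *ᵥ utilde)) ⬝ᵥ g1 := rfl
      _ = (B⁻¹ *ᵥ utilde) ⬝ᵥ (Uᵀᵀ *ᵥ g1) := dshift17 _ _ _
      _ = (B⁻¹ *ᵥ utilde) ⬝ᵥ utilde := by rw [transpose_transpose, hg1feas]
      _ = utilde ⬝ᵥ B⁻¹ *ᵥ utilde := dotProduct_comm _ _
  have hray : (Y *ᵥ g1) ⬝ᵥ (Y *ᵥ g1) ≤ lam * (g1 ⬝ᵥ g1) := by
    have h := rayleigh17 (Yᵀ * Y) hY g1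
    rw [← hlam] at h
    calc (Y *ᵥ g1) ⬝ᵥ (Y *ᵥ g1) = g1 ⬝ᵥ ((Yᵀ * Y) *ᵥ g1) := by rw [dshift17, mulVec_mulVec]
      _ ≤ lam * (g1 ⬝ᵥ g1) := h
  have h2 : utilde ⬝ᵥ A⁻¹ *ᵥ utilde ≤ (c + lam) * (utilde ⬝ᵥ B⁻¹ *ᵥ utilde) := by
    have hq := hquad g1
    have hm := hmin0 g1 hg1feas
    rw [hval0] at hm
    rw [← hval1]
    have hexpand : (c + lam) * (g1 ⬝ᵥ g1) = c * (g1 ⬝ᵥ g1) + lam * (g1 ⬝ᵥ g1) := by ring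
    linarith
  constructor
  · have hsum : ∑ i, gstar i ^ 2 = gstar ⬝ᵥ gstar := by
      simp [dotProduct, sq]
    rw [hsum, one_div, inv_mul_eq_div, le_div_iff₀ hc]
    linarith
  · have hfinal := mul_le_mul_of_nonneg_left h2 (le_of_lt (one_div_pos.mpr hc))
    calc (1/c) * (utilde ⬝ᵥ A⁻¹ *ᵥ utilde)
        ≤ (1/c) * ((c + lam) * (utilde ⬝ᵥ B⁻¹ *ᵥ utilde)) := hfinal
      _ = (1/c) * (c + lam) * (utilde ⬝ᵥ B⁻¹ *ᵥ utilde) := by ring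
end
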